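/- arXiv:0911.4156 — 2 statements merged into one kernel-verified Lean document; each statement's English description precedes it below -/
import Mathlib

section
/- Suppose H = [[H₁₁, H₁₂],[H₁₂†, H₂₂]] Hermitian and L = [[L₁₁, L₁₂],[0, L₂₂]] are block matrices with respect to H = H₁ ⊕ H₂, with H₁₂ = -(i/2) L₁₁† L₁₂. If a full-rank density matrix ρ is stationary for the Lindblad equation ρ̇ = -i[H,ρ] + LρL† - ½{L†L,ρ}, then L₁₂ = 0 (and hence H₁₂ = 0), i.e., H and L are both block diagonal. -/
open Matrix in
private lemma aux_trace_zero {p q : Type*} [Fintype p] [Fintype q]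
    {A : Matrix p q ℂ} (h : (Aᴴ * A).trace = 0) : A = 0 := by
  have h1 : ∑ j, ∑ i, (Complex.normSq (A i j) : ℂ) = 0 := by
    rw [← h, Matrix.trace]
    refine (Finset.sum_congr rfl fun j _ => ?_).symm
    simp only [Matrix.diag_apply, Matrix.mul_apply, Matrix.conjTranspose_apply]
    refine Finset.sum_congr rfl fun i _ => ?_
    rw [RCLike.star_def, mul_comm, Complex.mul_conj]
  have h2 : ∑ j, ∑ i, Complex.normSq (A i j) = 0 := by exact_mod_cast h1
  ext i j
  have h3 := (Finset.sum_eq_zero_iff_of_nonneg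
    (fun j _ => Finset.sum_nonneg fun i _ => Complex.normSq_nonneg _)).mp h2 j
    (Finset.mem_univ j)
  have h4 := (Finset.sum_eq_zero_iff_of_nonneg
    (fun i _ => Complex.normSq_nonneg _)).mp h3 i (Finset.mem_univ i)
  simpa using Complex.normSq_eq_zero.mp h4

open Matrix Complex ComplexOrder in
/-- if `L` is block upper triangular, `H` Hermitian with
`H₁₂ = −(i/2) L₁₁† L₁₂`, and a full-rank density matrix is stationary for the
associated Lindblad equation, then `L₁₂ = 0` (hence also `H₁₂ = 0`). -/
theorem full_rank_stationary_forces_block_diagonal (m r : ℕ) (hm : 0 < m) (hr : 0 < r)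
    (H11 : Matrix (Fin m) (Fin m) ℂ) (H12 : Matrix (Fin m) (Fin r) ℂ)
    (H22 : Matrix (Fin r) (Fin r) ℂ)
    (L11 : Matrix (Fin m) (Fin m) ℂ) (L12 : Matrix (Fin m) (Fin r) ℂ)
    (L22 : Matrix (Fin r) (Fin r) ℂ)
    (hH : (Matrix.fromBlocks H11 H12 H12ᴴ H22).IsHermitian)
    (hH12 : H12 = -(Complex.I / 2) • (L11ᴴ * L12))
    (ρ : Matrix (Fin m ⊕ Fin r) (Fin m ⊕ Fin r) ℂ)
    (hρ : ρ.PosDef) (hρtr : ρ.trace = 1)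
    (hstat : -(Complex.I) • ((Matrix.fromBlocks H11 H12 H12ᴴ H22) * ρ -
        ρ * (Matrix.fromBlocks H11 H12 H12ᴴ H22)) +
      (Matrix.fromBlocks L11 L12 0 L22) * ρ * (Matrix.fromBlocks L11 L12 0 L22)ᴴ -
      (1 / 2 : ℂ) • ((Matrix.fromBlocks L11 L12 0 L22)ᴴ * (Matrix.fromBlocks L11 L12 0 L22) * ρ +
        ρ * ((Matrix.fromBlocks L11 L12 0 L22)ᴴ * (Matrix.fromBlocks L11 L12 0 L22))) = 0) :
    L12 = 0 ∧ H12 = 0 := by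
  classical
  set Hm := Matrix.fromBlocks H11 H12 H12ᴴ H22 with hHm
  set Lm := Matrix.fromBlocks L11 L12 0 L22 with hLm
  set P : Matrix (Fin m ⊕ Fin r) (Fin m ⊕ Fin r) ℂ := Matrix.fromBlocks 0 0 0 1 with hP
  set K : Matrix (Fin m ⊕ Fin r) (Fin m ⊕ Fin r) ℂ := Matrix.fromBlocks 0 L12 0 0 with hK
  -- The key operator identity
  have hM : -(Complex.I) • (P * Hm - Hm * P) + Lmᴴ * P * Lm
      - (1/2 : ℂ) • (P * (Lmᴴ * Lm) + (Lmᴴ * Lm) * P) = -(Kᴴ * K) := by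
    rw [hHm, hLm, hP, hK, hH12]
    simp only [Matrix.fromBlocks_conjTranspose, Matrix.fromBlocks_multiply,
      Matrix.conjTranspose_zero, Matrix.conjTranspose_smul, Matrix.conjTranspose_mul,
      Matrix.conjTranspose_conjTranspose, Matrix.zero_mul, Matrix.mul_zero,
      zero_add, add_zero, Matrix.one_mul, Matrix.mul_one,
      Matrix.smul_mul, Matrix.mul_smul, sub_eq_add_neg,
      Matrix.fromBlocks_smul, Matrix.fromBlocks_neg, Matrix.fromBlocks_add]
    rw [Matrix.fromBlocks_inj]
    have c1 : Complex.I * (Complex.I / 2) = -(2⁻¹ : ℂ) := by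
      rw [mul_div_assoc', Complex.I_mul_I]; norm_num
    have c2 : Complex.I * (-Complex.I / 2) = (2⁻¹ : ℂ) := by
      rw [mul_div_assoc', mul_neg, Complex.I_mul_I]; norm_num
    refine ⟨?_, ?_, ?_, ?_⟩ <;> · simp [smul_smul, c1, c2]; try module
  -- trace consequence of stationarity
  have h0 : (P * (-(Complex.I) • (Hm * ρ - ρ * Hm) + Lm * ρ * Lmᴴ -
      (1 / 2 : ℂ) • (Lmᴴ * Lm * ρ + ρ * (Lmᴴ * Lm)))).trace = 0 := by
    rw [hstat, Matrix.mul_zero, Matrix.trace_zero]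
  have e2 : (P * (ρ * Hm)).trace = (Hm * (P * ρ)).trace := by
    rw [← Matrix.mul_assoc, Matrix.trace_mul_comm (P * ρ) Hm]
  have e3 : (P * (Lm * (ρ * Lmᴴ))).trace = (Lmᴴ * (P * (Lm * ρ))).trace := by
    simp only [← Matrix.mul_assoc]
    rw [Matrix.trace_mul_comm (P * Lm * ρ) Lmᴴ]
    simp only [← Matrix.mul_assoc]
  have e5 : (P * (ρ * (Lmᴴ * Lm))).trace = (Lmᴴ * (Lm * (P * ρ))).trace := by
    rw [← Matrix.mul_assoc, Matrix.trace_mul_comm (P * ρ) (Lmᴴ * Lm), Matrix.mul_assoc]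
  have h1 : ((-(Complex.I) • (P * Hm - Hm * P) + Lmᴴ * P * Lm
      - (1/2 : ℂ) • (P * (Lmᴴ * Lm) + (Lmᴴ * Lm) * P)) * ρ).trace = 0 := by
    rw [← h0]
    simp only [Matrix.mul_add, Matrix.add_mul, Matrix.mul_sub, Matrix.sub_mul,
      Matrix.mul_smul, Matrix.smul_mul, Matrix.trace_add, Matrix.trace_sub,
      Matrix.trace_smul, smul_eq_mul, Matrix.mul_assoc]
    linear_combination -Complex.I * e2 - e3 + (1/2 : ℂ) * e5
  have h2 : (Kᴴ * K * ρ).trace = 0 := by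
    rw [hM] at h1
    simpa using h1
  -- use the square root of ρ
  have hps := hρ.posSemidef
  set s := (open scoped MatrixOrder in CFC.sqrt ρ) with hs
  have hss : s * s = ρ := by open scoped MatrixOrder in exact CFC.sqrt_mul_sqrt_self ρ hps.nonneg
  have hsH : sᴴ = s := by open scoped MatrixOrder in exact (CFC.sqrt_nonneg ρ).posSemidef.isHermitian
  have hKs : K * s = 0 := by
    apply aux_trace_zero
    rw [Matrix.conjTranspose_mul, hsH, Matrix.mul_assoc,
      Matrix.trace_mul_comm s (Kᴴ * (K * s))]
    calc (Kᴴ * (K * s) * s).trace = (Kᴴ * K * ρ).trace := by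
          rw [Matrix.mul_assoc, Matrix.mul_assoc, hss, ← Matrix.mul_assoc]
      _ = 0 := h2
  have hKρ : K * ρ = 0 := by
    rw [← hss, ← Matrix.mul_assoc, hKs, Matrix.zero_mul]
  have hdet : IsUnit ρ.det := (Matrix.isUnit_iff_isUnit_det ρ).mp hρ.isUnit
  have hK0 : K = 0 := by
    calc K = K * ρ * ρ⁻¹ := by
          rw [Matrix.mul_assoc, Matrix.mul_nonsing_inv ρ hdet, Matrix.mul_one]
      _ = 0 := by rw [hKρ, Matrix.zero_mul]
  have hL12 : L12 = 0 := by
    have := congrArg Matrix.toBlocks₁₂ hK0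
    simpa [hK, Matrix.toBlocks_fromBlocks₁₂] using this.trans
      (by ext; rfl : Matrix.toBlocks₁₂ (0 : Matrix (Fin m ⊕ Fin r) (Fin m ⊕ Fin r) ℂ) = 0)
  exact ⟨hL12, by rw [hH12, hL12]; simp⟩
end

section
/- Let {f_n} be a monic polynomial sequence over ℝ with f₀ = 1 satisfying the three-term recurrence f_{n+1}(x) = (x − α_{n+1}) f_n(x) − β_n² f_{n−1}(x) with β_n ≠ 0 for all n. Then for each n ≥ 1, the polynomial f_n has n distinct real roots, and the roots of f_n and f_{n+1} strictly interlace. -/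
open Polynomial

lemma ttr_eq_prod (p : Polynomial ℝ) (n : ℕ) (hm : p.Monic) (hd : p.natDegree = n)
    (r : Fin n → ℝ) (hr : Function.Injective r) (hroots : ∀ i, p.eval (r i) = 0) :
    p = ∏ i, (X - C (r i)) := by
  have hp0 : p ≠ 0 := hm.ne_zero
  have hnd : (Finset.univ.val.map r).Nodup := Finset.univ.nodup.map hr
  have hM : (Finset.univ.val.map r) ≤ p.roots := by
    refine Multiset.le_iff_count.2 fun a => ?_
    by_cases ha : a ∈ Finset.univ.val.map r
    · have h1 : (Finset.univ.val.map r).count a ≤ 1 :=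
        Multiset.nodup_iff_count_le_one.1 hnd a
      have h2 : 1 ≤ p.roots.count a := by
        rw [Multiset.one_le_count_iff_mem, mem_roots hp0]
        obtain ⟨i, _, rfl⟩ := Multiset.mem_map.1 ha
        exact hroots i
      omega
    · rw [Multiset.count_eq_zero_of_notMem ha]; exact Nat.zero_le _
  have hcard : Multiset.card (Finset.univ.val.map r) = n := by simp
  have hroots_card : Multiset.card p.roots ≤ n := hd ▸ p.card_roots'
  have hMeq : (Finset.univ.val.map r) = p.roots :=
    Multiset.eq_of_le_of_card_le hM (by omega)
  have := Splits.eq_prod_roots_of_monic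
    (by rw [splits_iff_card_roots, ← hMeq, hcard, hd]) hm
  rw [this, ← hMeq, Finset.prod_eq_multiset_prod, Multiset.map_map]
  rfl

lemma ttr_sign (p : Polynomial ℝ) (n : ℕ) (hm : p.Monic) (hd : p.natDegree = n)
    (r : Fin n → ℝ) (hr : Function.Injective r) (hroots : ∀ i, p.eval (r i) = 0)
    (x : ℝ) (k : ℕ) (hk : k ≤ n)
    (hlow : ∀ i : Fin n, (i : ℕ) < k → r i < x)
    (hhigh : ∀ i : Fin n, k ≤ (i : ℕ) → x < r i) :
    0 < (-1 : ℝ) ^ (n - k) * p.eval x := by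
  have hep : p.eval x = ∏ i, (x - r i) := by
    rw [ttr_eq_prod p n hm hd r hr hroots]
    simp [eval_prod]
  have hcard : (Finset.univ.filter fun i : Fin n => k ≤ (i : ℕ)).card = n - k := by
    have : (Finset.univ.filter fun i : Fin n => k ≤ (i : ℕ)).card
        = ∑ i : Fin n, (if k ≤ (i : ℕ) then 1 else 0) := by
      rw [Finset.card_filter]
    rw [this, Fin.sum_univ_eq_sum_range (fun i => if k ≤ i then 1 else 0) n,
      ← Finset.card_filter]
    have : (Finset.range n).filter (fun i => k ≤ i) = Finset.Ico k n := by
      ext m; simp [Finset.mem_Ico]; omega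
    rw [this, Nat.card_Ico]
  have key : (-1 : ℝ) ^ (n - k) * ∏ i, (x - r i)
      = ∏ i : Fin n, (if k ≤ (i : ℕ) then r i - x else x - r i) := by
    have : ∀ i : Fin n, (if k ≤ (i : ℕ) then r i - x else x - r i)
        = (if k ≤ (i : ℕ) then (-1 : ℝ) else 1) * (x - r i) := by
      intro i; split <;> ring
    rw [Finset.prod_congr rfl (fun i _ => this i), Finset.prod_mul_distrib,
      Finset.prod_ite, Finset.prod_const, Finset.prod_const, hcard]
    simp
  rw [hep, key]
  apply Finset.prod_pos
  intro i _
  by_cases h : k ≤ (i : ℕ)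
  · rw [if_pos h]; exact sub_pos.2 (hhigh i h)
  · rw [if_neg h]; exact sub_pos.2 (hlow i (by omega))

lemma ttr_exists_big (p : Polynomial ℝ) (hm : p.Monic) (hd : 0 < p.natDegree) (c : ℝ) :
    ∃ b, c < b ∧ 0 < p.eval b := by
  have h := p.tendsto_atTop_of_leadingCoeff_nonneg (natDegree_pos_iff_degree_pos.1 hd)
    (by rw [hm.leadingCoeff]; norm_num)
  obtain ⟨b, hb1, hb2⟩ := ((h.eventually_gt_atTop 0).and (Filter.eventually_gt_atTop c)).exists
  exact ⟨b, hb2, hb1⟩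

lemma ttr_exists_small (p : Polynomial ℝ) (hm : p.Monic) (hd : 0 < p.natDegree) (c : ℝ) :
    ∃ a, a < c ∧ 0 < (-1 : ℝ) ^ p.natDegree * p.eval a := by
  set d := p.natDegree with hdd
  set q : Polynomial ℝ := C ((-1 : ℝ) ^ d) * (p.comp (-X)) with hq
  have hcompdeg : (p.comp (-X)).natDegree = d := by
    rw [natDegree_comp]
    simp [hdd]
  have hlcq : q.leadingCoeff = 1 := by
    rw [hq, leadingCoeff_mul, leadingCoeff_C, leadingCoeff_comp (by simp)]
    simp only [hm.leadingCoeff, leadingCoeff_neg, leadingCoeff_X, one_mul, ← hdd, ← pow_add]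
    exact Even.neg_one_pow ⟨d, rfl⟩
  have hqdeg : q.natDegree = d := by
    rw [hq, natDegree_C_mul (by positivity), hcompdeg]
  have h := q.tendsto_atTop_of_leadingCoeff_nonneg
    (natDegree_pos_iff_degree_pos.1 (by rw [hqdeg]; exact hd)) (by rw [hlcq]; norm_num)
  obtain ⟨x, hx1, hx2⟩ := ((h.eventually_gt_atTop 0).and (Filter.eventually_gt_atTop (-c))).exists
  refine ⟨-x, by linarith, ?_⟩
  have : q.eval x = (-1 : ℝ) ^ d * p.eval (-x) := by
    rw [hq]
    simp [eval_comp]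
  rw [← this]
  exact hx1

lemma ttr_pick (p : Polynomial ℝ) (k : ℕ) (u : ℕ → ℝ)
    (hu : ∀ j ≤ k, u j < u (j + 1))
    (hsign : ∀ j ≤ k + 1, 0 < (-1 : ℝ) ^ (k + 1 - j) * p.eval (u j)) :
    ∀ j ≤ k, ∃ x, u j < x ∧ x < u (j + 1) ∧ p.eval x = 0 := by
  intro j hj
  have h1 := hsign j (by omega)
  have h2 := hsign (j + 1) (by omega)
  rw [show k + 1 - (j + 1) = k - j from by omega] at h2
  set a := p.eval (u j) with ha
  set b := p.eval (u (j + 1)) with hb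
  have hpow : ((-1 : ℝ)) ^ (k + 1 - j) * ((-1 : ℝ)) ^ (k - j) = -1 := by
    rw [← pow_add, show k + 1 - j + (k - j) = 2 * (k - j) + 1 from by omega,
      pow_succ, pow_mul]
    norm_num
  have h3 : a * b < 0 := by
    have hmul := mul_pos h1 h2
    have : ((-1 : ℝ) ^ (k + 1 - j) * a) * ((-1 : ℝ) ^ (k - j) * b)
        = ((-1 : ℝ) ^ (k + 1 - j) * (-1 : ℝ) ^ (k - j)) * (a * b) := by ring
    rw [this, hpow] at hmul
    linarith
  have hcont : ContinuousOn (fun x => p.eval x) (Set.Icc (u j) (u (j + 1))) :=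
    (p.continuous_aeval).continuousOn
  rcases lt_or_ge a 0 with hA | hA
  · have hB : 0 < b := by nlinarith
    have := intermediate_value_Ioo (le_of_lt (hu j hj)) hcont
    obtain ⟨x, hx1, hx2⟩ := this (Set.mem_Ioo.2 ⟨hA, hB⟩)
    exact ⟨x, hx1.1, hx1.2, hx2⟩
  · have hA' : 0 < a := by
      rcases hA.lt_or_eq with h | h
      · exact h
      · exfalso; rw [← h] at h3; simp at h3
    have hB : b < 0 := by nlinarith
    have := intermediate_value_Ioo' (le_of_lt (hu j hj)) hcont
    obtain ⟨x, hx1, hx2⟩ := this (Set.mem_Ioo.2 ⟨hB, hA'⟩)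
    exact ⟨x, hx1.1, hx1.2, hx2⟩

lemma ttr_main (p : Polynomial ℝ) (k : ℕ) (hk : 1 ≤ k) (hm : p.Monic)
    (hd : p.natDegree = k + 1) (s : Fin k → ℝ) (hs : StrictMono s)
    (hsign : ∀ i : Fin k, 0 < (-1 : ℝ) ^ (k - (i : ℕ)) * p.eval (s i)) :
    ∃ t : Fin (k + 1) → ℝ, StrictMono t ∧ (∀ j, p.eval (t j) = 0) ∧
      ∀ i : Fin k, t i.castSucc < s i ∧ s i < t i.succ := by
  obtain ⟨b, hb1, hb2⟩ := ttr_exists_big p hm (by omega) (s ⟨k - 1, by omega⟩)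
  obtain ⟨a, ha1, ha2⟩ := ttr_exists_small p hm (by omega) (s ⟨0, by omega⟩)
  rw [hd] at ha2
  set u : ℕ → ℝ := fun j => if hj : 1 ≤ j ∧ j ≤ k then s ⟨j - 1, by omega⟩
    else if j = 0 then a else b with hu_def
  have hu0 : u 0 = a := by simp [hu_def]
  have huj : ∀ j (h1 : 1 ≤ j) (h2 : j ≤ k), u j = s ⟨j - 1, by omega⟩ := by
    intro j h1 h2
    simp only [hu_def]
    rw [dif_pos ⟨h1, h2⟩]
  have hub : u (k + 1) = b := by
    simp only [hu_def]
    rw [dif_neg (by omega), if_neg (by omega)]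
  have hu : ∀ j ≤ k, u j < u (j + 1) := by
    intro j hj
    rcases Nat.eq_zero_or_pos j with rfl | hj1
    · rw [hu0, huj 1 le_rfl (by omega)]
      exact ha1
    · rcases eq_or_lt_of_le hj with rfl | hjk
      · rw [hub, huj j hj1 le_rfl]
        refine lt_of_le_of_lt ?_ hb1
        rcases eq_or_lt_of_le (show j - 1 ≤ j - 1 from le_rfl) with _ | _
        · exact le_of_eq (congrArg s (by ext; simp))
        · exact le_of_eq (congrArg s (by ext; simp))
      · rw [huj j hj1 (by omega), huj (j + 1) (by omega) (by omega)]
        exact hs (by simp [Fin.lt_def]; omega)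
  have hsign' : ∀ j ≤ k + 1, 0 < (-1 : ℝ) ^ (k + 1 - j) * p.eval (u j) := by
    intro j hj
    rcases Nat.eq_zero_or_pos j with rfl | hj1
    · rw [hu0]; simpa using ha2
    · rcases eq_or_lt_of_le hj with rfl | hjk
      · rw [hub]
        simpa using hb2
      · rw [huj j hj1 (by omega)]
        have := hsign ⟨j - 1, by omega⟩
        rw [show k - ((⟨j - 1, by omega⟩ : Fin k) : ℕ) = k + 1 - j from by simp; omega] at this
        exact this
  have hpick := ttr_pick p k u hu hsign'
  have hex : ∀ j : Fin (k + 1), ∃ x, u j < x ∧ x < u ((j : ℕ) + 1) ∧ p.eval x = 0 :=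
    fun j => hpick j (by omega)
  choose t ht using hex
  have hsi : ∀ i : Fin k, u ((i : ℕ) + 1) = s i := by
    intro i
    rw [huj ((i : ℕ) + 1) (by omega) (by omega)]
    exact congrArg s (by ext; simp)
  refine ⟨t, ?_, fun j => (ht j).2.2, fun i => ?_⟩
  · rw [Fin.strictMono_iff_lt_succ]
    intro i
    have h1 : t i.castSucc < u ((i : ℕ) + 1) := by
      have := (ht i.castSucc).2.1
      simpa using this
    have h2 : u ((i : ℕ) + 1) < t i.succ := by
      have := (ht i.succ).1
      simpa using this
    exact h1.trans h2
  · constructor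
    · have := (ht i.castSucc).2.1
      rw [show ((i.castSucc : ℕ) + 1) = (i : ℕ) + 1 from by simp, hsi i] at this
      exact this
    · have := (ht i.succ).1
      rw [show ((i.succ : ℕ)) = (i : ℕ) + 1 from by simp, hsi i] at this
      exact this

lemma ttr_deg (α β : ℕ → ℝ) (f : ℕ → Polynomial ℝ)
    (hf0 : f 0 = 1) (hf1 : f 1 = X - C (α 1))
    (hrec : ∀ n, 1 ≤ n →
      f (n + 1) = (X - C (α (n + 1))) * f n - C ((β n) ^ 2) * f (n - 1)) :
    ∀ n, (f n).Monic ∧ (f n).natDegree = n := by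
  have key : ∀ n, ((f n).Monic ∧ (f n).natDegree = n) ∧
      ((f (n + 1)).Monic ∧ (f (n + 1)).natDegree = n + 1) := by
    intro n
    induction n with
    | zero =>
      refine ⟨⟨by rw [hf0]; exact monic_one, by rw [hf0]; simp⟩,
        ⟨by rw [hf1]; exact monic_X_sub_C _, by rw [hf1]; exact natDegree_X_sub_C _⟩⟩
    | succ n ih =>
      obtain ⟨⟨hm0, hd0⟩, hm1, hd1⟩ := ih
      have hrw : f (n + 2) = (X - C (α (n + 2))) * f (n + 1) - C ((β (n + 1)) ^ 2) * f n := by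
        simpa using hrec (n + 1) (by omega)
      have hPm : ((X - C (α (n + 2))) * f (n + 1)).Monic := (monic_X_sub_C _).mul hm1
      have hPd : ((X - C (α (n + 2))) * f (n + 1)).natDegree = n + 2 := by
        rw [(monic_X_sub_C (α (n + 2))).natDegree_mul hm1, natDegree_X_sub_C, hd1]
        omega
      have hQd : (C ((β (n + 1)) ^ 2) * f n).natDegree ≤ n :=
        le_trans natDegree_mul_le (by simp [hd0])
      have hlt : (C ((β (n + 1)) ^ 2) * f n).natDegree
          < ((X - C (α (n + 2))) * f (n + 1)).natDegree := by omega
      have hm2 : (f (n + 2)).Monic := by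
        rw [hrw, sub_eq_add_neg]
        exact hPm.add_of_left (by rw [degree_neg]; exact degree_lt_degree hlt)
      have hd2 : (f (n + 2)).natDegree = n + 2 := by
        rw [hrw, natDegree_sub_eq_left_of_natDegree_lt hlt, hPd]
      exact ⟨⟨hm1, hd1⟩, hm2, hd2⟩
  exact fun n => (key n).1


open Polynomial in
/-- polynomials satisfying the Jacobi three-term recurrence with `β_n ≠ 0`
have, for each `n ≥ 1`, `n` distinct real roots, and the roots of `f_n` and `f_{n+1}`
strictly interlace. -/
theorem three_term_recurrence_real_interlacing_roots
    (α β : ℕ → ℝ) (hβ : ∀ n, β n ≠ 0)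
    (f : ℕ → Polynomial ℝ)
    (hf0 : f 0 = 1)
    (hf1 : f 1 = X - C (α 1))
    (hrec : ∀ n, 1 ≤ n →
      f (n + 1) = (X - C (α (n + 1))) * f n - C ((β n) ^ 2) * f (n - 1)) :
    ∀ n, 1 ≤ n →
      ((f n).roots.toFinset.card = n) ∧
      ∃ (r : Fin n → ℝ) (s : Fin (n + 1) → ℝ), StrictMono r ∧ StrictMono s ∧
        (∀ i, (f n).eval (r i) = 0) ∧ (∀ i, (f (n + 1)).eval (s i) = 0) ∧
        ∀ i : Fin n, s i.castSucc < r i ∧ r i < s i.succ := by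
  have hdeg := ttr_deg α β f hf0 hf1 hrec
  have G : ∀ n, 1 ≤ n → ∃ (r : Fin n → ℝ) (s : Fin (n + 1) → ℝ),
      StrictMono r ∧ StrictMono s ∧
      (∀ i, (f n).eval (r i) = 0) ∧ (∀ i, (f (n + 1)).eval (s i) = 0) ∧
      ∀ i : Fin n, s i.castSucc < r i ∧ r i < s i.succ := by
    intro n hn
    induction n with
    | zero => omega
    | succ n ih =>
      rcases Nat.eq_zero_or_pos n with rfl | hn1
      · -- base case n = 1
        set r : Fin 1 → ℝ := fun _ => α 1 with hrdef
        have hr : StrictMono r := fun i j h => absurd (Subsingleton.elim i j) (ne_of_lt h)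
        have hfr : ∀ i, (f 1).eval (r i) = 0 := by intro i; rw [hf1]; simp [hrdef]
        have hsgn : ∀ i : Fin 1, 0 < (-1 : ℝ) ^ (1 - (i : ℕ)) * (f 2).eval (r i) := by
          intro i
          have hi : (i : ℕ) = 0 := by omega
          have hf2 : (f 2).eval (α 1) = -(β 1) ^ 2 := by
            have h := hrec 1 le_rfl
            simp only [show (1 : ℕ) - 1 = 0 from rfl] at h
            rw [h, hf1, hf0]
            simp
          have : r i = α 1 := rfl
          rw [hi, this, hf2]
          have := hβ 1
          simp
          positivity
        obtain ⟨t, ht1, ht2, ht3⟩ := ttr_main (f 2) 1 le_rfl (hdeg 2).1 (hdeg 2).2 r hr hsgn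
        exact ⟨r, t, hr, ht1, hfr, ht2, ht3⟩
      · obtain ⟨r, s, hr, hs, hfr, hfs, hint⟩ := ih hn1
        have hsgn : ∀ i : Fin (n + 1), 0 < (-1 : ℝ) ^ ((n + 1) - (i : ℕ)) * (f (n + 2)).eval (s i) := by
          intro i
          have hlow : ∀ j : Fin n, (j : ℕ) < (i : ℕ) → r j < s i := by
            intro j hj
            exact lt_of_lt_of_le (hint j).2 (hs.monotone (by rw [Fin.le_def]; simp; omega))
          have hhigh : ∀ j : Fin n, (i : ℕ) ≤ (j : ℕ) → s i < r j := by
            intro j hj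
            exact lt_of_le_of_lt (hs.monotone (by rw [Fin.le_def]; simp; omega)) (hint j).1
          have hfn_sign := ttr_sign (f n) n (hdeg n).1 (hdeg n).2 r hr.injective hfr
            (s i) (i : ℕ) (by omega) hlow hhigh
          have heval : (f (n + 2)).eval (s i) = -((β (n + 1)) ^ 2 * (f n).eval (s i)) := by
            have h := hrec (n + 1) (by omega)
            simp only [show n + 1 - 1 = n from by omega] at h
            rw [h]
            simp [hfs i]
          rw [heval, show (n + 1) - (i : ℕ) = (n - (i : ℕ)) + 1 from by omega, pow_succ]
          have hb2 : 0 < (β (n + 1)) ^ 2 := by have := hβ (n + 1); positivity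
          nlinarith [mul_pos hb2 hfn_sign]
        obtain ⟨t, ht1, ht2, ht3⟩ := ttr_main (f (n + 2)) (n + 1) (by omega)
          (hdeg (n + 2)).1 (hdeg (n + 2)).2 s hs hsgn
        exact ⟨s, t, hs, ht1, hfs, ht2, ht3⟩
  intro n hn
  obtain ⟨r, s, hr, hs, hfr, hfs, hint⟩ := G n hn
  refine ⟨?_, r, s, hr, hs, hfr, hfs, hint⟩
  have hne : f n ≠ 0 := (hdeg n).1.ne_zero
  have himg : (Finset.univ.image r) ⊆ (f n).roots.toFinset := by
    intro x hx
    rw [Finset.mem_image] at hx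
    obtain ⟨i, _, rfl⟩ := hx
    rw [Multiset.mem_toFinset, mem_roots hne]
    exact hfr i
  have h1 : n ≤ (f n).roots.toFinset.card := by
    calc n = (Finset.univ.image r).card := by
          rw [Finset.card_image_of_injective _ hr.injective, Finset.card_univ, Fintype.card_fin]
      _ ≤ _ := Finset.card_le_card himg
  have h2 : (f n).roots.toFinset.card ≤ n := by
    refine le_trans (Multiset.toFinset_card_le _) ?_
    have := (f n).card_roots'
    have hd := (hdeg n).2
    omega
  omega
end
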